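/- For every dimension d ≥ 1, every Lebesgue cover {C_n}_{n∈[N]} of [0,1]^d, and every ε > 0, there exists a point p ∈ [0,1]^d such that the open ℓ∞ ball of radius ε centered at p intersects at least ⌈(1 + ε/(1+ε))^d⌉ of the sets C_n, i.e. |{n ∈ [N] : B°_∞(ε, p) ∩ C_n ≠ ∅}| ≥ ⌈(1 + ε/(1+ε))^d⌉. -/

import Mathlib

/-
Proof outline (all fully elementary):

Let `θ := ε/(1+ε)` and `h := θ/2`.  Define the 1-D "certificate" measure
`φ := Leb|_(h,1-h) + θ·(δ₀ + δ₁)` of total mass `1+θ`.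

* `key1d`: for any measurable `F ⊆ [0,1]` not containing both endpoints `0,1`,
  `φ(F) ≤ Leb(N_ε(F) ∩ [0,1])` where `N_ε` is the open ε-dilation.
* `layer1d` (via the layer-cake formula): for `g : ℝ → [0,1]` with support in `[0,1]`
  vanishing at `0` or at `1`,
  `∫ g dφ ≤ ∫_{[0,1]} (sup of g over the ε-window) dLeb`.
* `main_ind`: by induction over coordinates (using `lmarginal`), for each piece
  `D_n := C_n ∩ [0,1]^d` of the cover,
  `φ^{⊗d}(D_n) ≤ Leb^{⊗d}(N_ε(D_n) ∩ [0,1]^d)`;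
  the endpoint hypothesis of `layer1d` per coordinate comes from `hopp`
  (two points of `C_n ∩ [0,1]^d` whose i-th coordinates are 0 and 1 are at sup-distance
  exactly 1).
* Summing over `n` and using that the pieces cover the cube,
  `(1+θ)^d = φ^{⊗d}([0,1]^d) ≤ ∑_n Leb^{⊗d}(N_ε(D_n) ∩ [0,1]^d)`,
  so some point `p` of the cube lies in at least `⌈(1+θ)^d⌉` of the dilations
  `N_ε(D_n)`, i.e. its open ε-ball meets at least that many `C_n`.
-/

open MeasureTheory Set Function
open scoped ENNReal Pointwise

noncomputable section

namespace NbhdLeb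

/-- 1-D open dilation. -/
def dil (ε : ℝ) (F : Set ℝ) : Set ℝ := ⋃ x ∈ F, Set.Ioo (x - ε) (x + ε)

lemma mem_dil {ε : ℝ} {F : Set ℝ} {t : ℝ} :
    t ∈ dil ε F ↔ ∃ x ∈ F, x - ε < t ∧ t < x + ε := by
  simp only [dil, mem_iUnion, mem_Ioo, exists_prop]

lemma isOpen_dil {ε : ℝ} {F : Set ℝ} : IsOpen (dil ε F) :=
  isOpen_biUnion fun _ _ => isOpen_Ioo

lemma subset_dil {ε : ℝ} (hε : 0 < ε) {F : Set ℝ} : F ⊆ dil ε F := by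
  intro x hx
  exact mem_dil.2 ⟨x, hx, by linarith, by linarith⟩

variable {ε h : ℝ}

/-- The key 1-D inequality, case where `1 ∈ F`. -/
lemma key1d_right (hε : 0 < ε) (hh : 0 < h) (hhε : 2*h ≤ ε) (hh2 : h ≤ 1/2)
    {F : Set ℝ} (hFm : MeasurableSet F) (hF01 : F ⊆ Icc 0 1) (h1F : (1:ℝ) ∈ F) :
    volume (F ∩ Ioo h (1-h)) + ENNReal.ofReal (2*h)
      ≤ volume (dil ε F ∩ Icc 0 1) := by
  have hne : F.Nonempty := ⟨1, h1F⟩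
  have hbdd : BddBelow F := ⟨0, fun x hx => (hF01 hx).1⟩
  set a := sInf F with ha
  have ha0 : 0 ≤ a := le_csInf hne fun x hx => (hF01 hx).1
  have ha1 : a ≤ 1 := csInf_le hbdd h1F
  have hεh : h < ε := by linarith
  have haF : ∀ x ∈ F, a ≤ x := fun x hx => csInf_le hbdd hx
  -- any point of the ε-window around `a` is in the dilation
  have hwin : ∀ t : ℝ, a - ε < t → t < a + ε → t ∈ dil ε F := by
    intro t h1 h2
    obtain ⟨f, hfF, hf⟩ := exists_lt_of_csInf_lt hne (show a < t + ε by linarith)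
    refine mem_dil.2 ⟨f, hfF, by linarith, ?_⟩
    have := haF f hfF
    linarith
  -- the top piece
  have htop : Ioo (1-h) 1 ⊆ dil ε F ∩ Icc 0 1 := by
    intro x hx
    refine ⟨mem_dil.2 ⟨1, h1F, by linarith [hx.1], by linarith [hx.2]⟩, ?_, le_of_lt hx.2⟩
    have := hx.1; linarith
  have hFdil : F ∩ Ioo h (1-h) ⊆ dil ε F ∩ Icc 0 1 := by
    intro x hx
    exact ⟨subset_dil hε hx.1, hF01 hx.1⟩
  have hmFI : MeasurableSet (F ∩ Ioo h (1-h)) := hFm.inter measurableSet_Ioo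
  have hvol_top : volume (Ioo (1-h) (1:ℝ)) = ENNReal.ofReal h := by
    rw [Real.volume_Ioo]; norm_num
  rcases lt_or_ge a h with hah | hah
  · -- Case A : `a < h`. Pieces: `Ioo 0 h`, `F ∩ Ioo h (1-h)`, `Ioo (1-h) 1`.
    have hbot : Ioo (0:ℝ) h ⊆ dil ε F ∩ Icc 0 1 := by
      intro x hx
      refine ⟨hwin x (by linarith [hx.1]) (by linarith [hx.2]), le_of_lt hx.1, by
        have := hx.2; linarith⟩
    have hU : Ioo (0:ℝ) h ∪ (F ∩ Ioo h (1-h)) ∪ Ioo (1-h) 1 ⊆ dil ε F ∩ Icc 0 1 :=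
      union_subset (union_subset hbot hFdil) htop
    have hd1 : Disjoint (Ioo (0:ℝ) h) (F ∩ Ioo h (1-h)) := by
      refine Set.disjoint_left.2 fun x hx hx' => ?_
      exact absurd hx'.2.1 (not_lt.2 (le_of_lt hx.2))
    have hd2 : Disjoint (Ioo (0:ℝ) h ∪ (F ∩ Ioo h (1-h))) (Ioo (1-h) 1) := by
      refine Set.disjoint_left.2 fun x hx hx' => ?_
      rcases hx with hx | hx
      · have := hx.2; have := hx'.1; linarith
      · have := hx.2.2; have := hx'.1; linarith
    calc volume (F ∩ Ioo h (1-h)) + ENNReal.ofReal (2*h)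
        = volume (Ioo (0:ℝ) h ∪ (F ∩ Ioo h (1-h)) ∪ Ioo (1-h) 1) := by
          rw [measure_union hd2 measurableSet_Ioo,
            measure_union hd1 hmFI, Real.volume_Ioo, hvol_top]
          rw [show (2:ℝ)*h = h + h by ring, ENNReal.ofReal_add hh.le hh.le]
          simp only [sub_zero]
          ring
      _ ≤ volume (dil ε F ∩ Icc 0 1) := measure_mono hU
  · rcases le_or_gt a (1-h) with hA1 | hA1
    · -- Case B1 : `h ≤ a ≤ 1-h`. Pieces: `Ioo (a-h) a`, `F ∩ Ioo h (1-h)`, `Ioo (1-h) 1`.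
      have hbot : Ioo (a-h) a ⊆ dil ε F ∩ Icc 0 1 := by
        intro x hx
        refine ⟨hwin x (by linarith [hx.1]) (by linarith [hx.2]), by linarith [hx.1], ?_⟩
        have := hx.2; linarith
      have hU : Ioo (a-h) a ∪ (F ∩ Ioo h (1-h)) ∪ Ioo (1-h) 1 ⊆ dil ε F ∩ Icc 0 1 :=
        union_subset (union_subset hbot hFdil) htop
      have hd1 : Disjoint (Ioo (a-h) a) (F ∩ Ioo h (1-h)) := by
        refine Set.disjoint_left.2 fun x hx hx' => ?_
        have := haF x hx'.1
        have := hx.2; linarith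
      have hd2 : Disjoint (Ioo (a-h) a ∪ (F ∩ Ioo h (1-h))) (Ioo (1-h) 1) := by
        refine Set.disjoint_left.2 fun x hx hx' => ?_
        rcases hx with hx | hx
        · have := hx.2; have := hx'.1; linarith
        · have := hx.2.2; have := hx'.1; linarith
      calc volume (F ∩ Ioo h (1-h)) + ENNReal.ofReal (2*h)
          = volume (Ioo (a-h) a ∪ (F ∩ Ioo h (1-h)) ∪ Ioo (1-h) 1) := by
            rw [measure_union hd2 measurableSet_Ioo,
              measure_union hd1 hmFI, Real.volume_Ioo, hvol_top]
            rw [show (2:ℝ)*h = h + h by ring, ENNReal.ofReal_add hh.le hh.le]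
            ring
        _ ≤ volume (dil ε F ∩ Icc 0 1) := measure_mono hU
    · -- Case B2 : `a > 1-h`. Pieces: `Ioo (max 0 (a-ε)) (1-h)`, `Ioo (1-h) 1`.
      have hFmid : F ∩ Ioo h (1-h) = ∅ := by
        ext x
        simp only [mem_inter_iff, mem_Ioo, mem_empty_iff_false, iff_false, not_and]
        intro hxF h1 h2
        have := haF x hxF; linarith
      have hbot : Ioo (max 0 (a-ε)) (1-h) ⊆ dil ε F ∩ Icc 0 1 := by
        intro x hx
        have hx1 : a - ε < x := lt_of_le_of_lt (le_max_right _ _) hx.1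
        have hx0 : 0 ≤ x := le_of_lt (lt_of_le_of_lt (le_max_left _ _) hx.1)
        refine ⟨hwin x hx1 (by linarith [hx.2]), hx0, by linarith [hx.2]⟩
      have hd : Disjoint (Ioo (max 0 (a-ε)) (1-h)) (Ioo (1-h) 1) := by
        refine Set.disjoint_left.2 fun x hx hx' => ?_
        have := hx.2; have := hx'.1; linarith
      have hU : Ioo (max 0 (a-ε)) (1-h) ∪ Ioo (1-h) 1 ⊆ dil ε F ∩ Icc 0 1 :=
        union_subset hbot htop
      have hlen : h ≤ 1 - h - max 0 (a-ε) := by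
        rcases le_or_gt a ε with hc | hc
        · rw [max_eq_left (by linarith)]; linarith
        · rw [max_eq_right (by linarith)]; linarith
      calc volume (F ∩ Ioo h (1-h)) + ENNReal.ofReal (2*h)
          = ENNReal.ofReal h + ENNReal.ofReal h := by
            rw [hFmid, measure_empty, zero_add,
              show (2:ℝ)*h = h + h by ring, ENNReal.ofReal_add hh.le hh.le]
        _ ≤ volume (Ioo (max 0 (a-ε)) (1-h)) + volume (Ioo (1-h) (1:ℝ)) := by
            rw [Real.volume_Ioo, hvol_top]
            exact add_le_add (ENNReal.ofReal_le_ofReal hlen) le_rfl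
        _ = volume (Ioo (max 0 (a-ε)) (1-h) ∪ Ioo (1-h) 1) := by
            rw [measure_union hd measurableSet_Ioo]
        _ ≤ volume (dil ε F ∩ Icc 0 1) := measure_mono hU

/-- The mirror case `0 ∈ F`, by reflection. -/
lemma key1d_left (hε : 0 < ε) (hh : 0 < h) (hhε : 2*h ≤ ε) (hh2 : h ≤ 1/2)
    {F : Set ℝ} (hFm : MeasurableSet F) (hF01 : F ⊆ Icc 0 1) (h0F : (0:ℝ) ∈ F) :
    volume (F ∩ Ioo h (1-h)) + ENNReal.ofReal (2*h)
      ≤ volume (dil ε F ∩ Icc 0 1) := by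
  have hmp : MeasurePreserving (fun t : ℝ => 1 - t) volume volume :=
    Measure.measurePreserving_sub_left volume 1
  have hvolT : ∀ S : Set ℝ, MeasurableSet S →
      volume ((fun t : ℝ => 1 - t) ⁻¹' S) = volume S := fun S hS =>
    hmp.measure_preimage hS.nullMeasurableSet
  set G := (fun t : ℝ => 1 - t) ⁻¹' F with hG
  have hGm : MeasurableSet G := hFm.preimage hmp.measurable
  have hG01 : G ⊆ Icc 0 1 := by
    intro x hx
    have hmem := hF01 hx
    simp only [mem_Icc] at hmem ⊢
    constructor <;> linarith [hmem.1, hmem.2]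
  have h1G : (1:ℝ) ∈ G := by
    simp only [hG, mem_preimage]
    simpa using h0F
  have key := key1d_right hε hh hhε hh2 hGm hG01 h1G
  have e1 : G ∩ Ioo h (1-h) = (fun t : ℝ => 1 - t) ⁻¹' (F ∩ Ioo h (1-h)) := by
    ext x
    simp only [hG, mem_inter_iff, mem_preimage, mem_Ioo]
    constructor
    · rintro ⟨h1, h2, h3⟩; exact ⟨h1, by linarith, by linarith⟩
    · rintro ⟨h1, h2, h3⟩; exact ⟨h1, by linarith, by linarith⟩
  have e2 : dil ε G ∩ Icc 0 1 = (fun t : ℝ => 1 - t) ⁻¹' (dil ε F ∩ Icc 0 1) := by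
    ext t
    simp only [mem_inter_iff, mem_preimage, mem_Icc, mem_dil, hG]
    constructor
    · rintro ⟨⟨x, hxG, hx1, hx2⟩, ht0, ht1⟩
      exact ⟨⟨1 - x, hxG, by linarith, by linarith⟩, by linarith, by linarith⟩
    · rintro ⟨⟨z, hzF, hz1, hz2⟩, ht0, ht1⟩
      refine ⟨⟨1 - z, by simpa using hzF, by linarith, by linarith⟩,
        by linarith, by linarith⟩
  rw [e1, e2, hvolT _ (hFm.inter measurableSet_Ioo),
    hvolT _ ((isOpen_dil (F := F) (ε := ε)).measurableSet.inter measurableSet_Icc)] at key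
  exact key

/-- The certificate measure on `ℝ`. -/
def phi (h : ℝ) : Measure ℝ :=
  volume.restrict (Ioo h (1-h)) + (ENNReal.ofReal (2*h)) • (Measure.dirac 0 + Measure.dirac 1)

lemma phi_apply {F : Set ℝ} (hFm : MeasurableSet F) :
    phi h F = volume (F ∩ Ioo h (1-h))
      + ENNReal.ofReal (2*h) * (F.indicator 1 0 + F.indicator 1 1) := by
  simp only [phi, Measure.add_apply, Measure.smul_apply, smul_eq_mul,
    Measure.restrict_apply hFm, Measure.dirac_apply' _ hFm]

/-- The combined key 1-D inequality. -/
lemma key1d (hε : 0 < ε) (hh : 0 < h) (hhε : 2*h ≤ ε) (hh2 : h ≤ 1/2)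
    {F : Set ℝ} (hFm : MeasurableSet F) (hF01 : F ⊆ Icc 0 1)
    (hnb : ¬(((0:ℝ) ∈ F) ∧ ((1:ℝ) ∈ F))) :
    phi h F ≤ volume (dil ε F ∩ Icc 0 1) := by
  rw [phi_apply hFm]
  by_cases h1F : (1:ℝ) ∈ F
  · have h0F : (0:ℝ) ∉ F := fun h0 => hnb ⟨h0, h1F⟩
    rw [Set.indicator_of_notMem h0F, Set.indicator_of_mem h1F]
    simpa using key1d_right hε hh hhε hh2 hFm hF01 h1F
  · rw [Set.indicator_of_notMem h1F]
    by_cases h0F : (0:ℝ) ∈ F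
    · rw [Set.indicator_of_mem h0F]
      simpa using key1d_left hε hh hhε hh2 hFm hF01 h0F
    · rw [Set.indicator_of_notMem h0F]
      simp only [add_zero, mul_zero]
      refine measure_mono fun x hx => ?_
      refine ⟨?_, hF01 hx.1⟩
      exact mem_dil.2 ⟨x, hx.1, by linarith, by linarith⟩

instance phi_finite (h : ℝ) : IsFiniteMeasure (phi h) := by
  constructor
  rw [phi_apply MeasurableSet.univ]
  simp only [Set.univ_inter, Set.indicator_univ, Pi.one_apply, Real.volume_Ioo]
  exact ENNReal.add_lt_top.2 ⟨ENNReal.ofReal_lt_top,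
    ENNReal.mul_lt_top ENNReal.ofReal_lt_top (by norm_num)⟩


/-- Layer-cake representation for `ℝ≥0∞`-valued functions bounded by 1. -/
lemma lintegral_eq_layer (μ : Measure ℝ) {g : ℝ → ℝ≥0∞} (hg : Measurable g)
    (hg1 : ∀ t, g t ≤ 1) :
    ∫⁻ t, g t ∂μ = ∫⁻ β in Ioi (0:ℝ), μ {t | ENNReal.ofReal β < g t} := by
  have hfin : ∀ t, g t ≠ ∞ := fun t => (lt_of_le_of_lt (hg1 t) ENNReal.one_lt_top).ne
  have hkey := lintegral_eq_lintegral_meas_lt μ (f := fun t => (g t).toReal)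
    (ae_of_all _ fun t => ENNReal.toReal_nonneg)
    (hg.ennreal_toReal.aemeasurable)
  have hLHS : ∫⁻ t, ENNReal.ofReal ((g t).toReal) ∂μ = ∫⁻ t, g t ∂μ :=
    lintegral_congr fun t => ENNReal.ofReal_toReal (hfin t)
  rw [hLHS] at hkey
  rw [hkey]
  refine setLIntegral_congr_fun measurableSet_Ioi (fun β hβ => ?_)
  congr 1
  ext t
  simp only [mem_setOf_eq]
  rw [ENNReal.ofReal_lt_iff_lt_toReal (le_of_lt hβ) (hfin t)]

/-- The 1-D step: integrating the windowed supremum against Lebesgue on `[0,1]`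
dominates integrating `g` against the certificate measure `phi`. -/
lemma layer1d (hε : 0 < ε) (hh : 0 < h) (hhε : 2*h ≤ ε) (hh2 : h ≤ 1/2)
    {g : ℝ → ℝ≥0∞} (hg : Measurable g) (hg1 : ∀ t, g t ≤ 1)
    (hsupp : ∀ t, g t ≠ 0 → t ∈ Icc (0:ℝ) 1)
    (hend : g 0 = 0 ∨ g 1 = 0) :
    ∫⁻ t, g t ∂(phi h)
      ≤ ∫⁻ t, (⨆ t' ∈ Ioo (t-ε) (t+ε), g t') ∂(volume.restrict (Icc (0:ℝ) 1)) := by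
  set Mg : ℝ → ℝ≥0∞ := fun t => ⨆ t' ∈ Ioo (t-ε) (t+ε), g t' with hMg
  have hlevel : ∀ β : ℝ≥0∞, {t | β < Mg t} = dil ε {t | β < g t} := by
    intro β
    ext t
    simp only [hMg, mem_setOf_eq, lt_iSup_iff, mem_dil, mem_Ioo]
    constructor
    · rintro ⟨x, ⟨hx1, hx2⟩, hgx⟩
      exact ⟨x, hgx, by linarith, by linarith⟩
    · rintro ⟨x, hgx, hx1, hx2⟩
      exact ⟨x, ⟨by linarith, by linarith⟩, hgx⟩
  have hMmeas : Measurable Mg := by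
    apply measurable_of_Ioi
    intro β
    have : Mg ⁻¹' Ioi β = dil ε {t | β < g t} := by
      rw [← hlevel]; rfl
    rw [this]
    exact isOpen_dil.measurableSet
  have hM1 : ∀ t, Mg t ≤ 1 := by
    intro t
    exact iSup₂_le fun t' _ => hg1 t'
  rw [lintegral_eq_layer (phi h) hg hg1, lintegral_eq_layer _ hMmeas hM1]
  refine lintegral_mono_ae ((ae_restrict_iff' measurableSet_Ioi).2 (ae_of_all _ fun β hβ => ?_)) 
  have hβ' : (0:ℝ≥0∞) < ENNReal.ofReal β := ENNReal.ofReal_pos.2 hβ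
  have hFm : MeasurableSet {t | ENNReal.ofReal β < g t} :=
    hg measurableSet_Ioi
  have hF01 : {t | ENNReal.ofReal β < g t} ⊆ Icc 0 1 := by
    intro t ht
    exact hsupp t (by simpa using (lt_of_le_of_lt zero_le ht).ne')
  have hnb : ¬(((0:ℝ) ∈ {t | ENNReal.ofReal β < g t}) ∧
      ((1:ℝ) ∈ {t | ENNReal.ofReal β < g t})) := by
    rintro ⟨h0, h1⟩
    rcases hend with he | he
    · rw [mem_setOf_eq, he] at h0; exact absurd h0 (by simp)
    · rw [mem_setOf_eq, he] at h1; exact absurd h1 (by simp)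
  calc phi h {t | ENNReal.ofReal β < g t}
      ≤ volume (dil ε {t | ENNReal.ofReal β < g t} ∩ Icc 0 1) :=
        key1d hε hh hhε hh2 hFm hF01 hnb
    _ = (volume.restrict (Icc (0:ℝ) 1)) {t | ENNReal.ofReal β < Mg t} := by
        rw [hlevel, Measure.restrict_apply isOpen_dil.measurableSet]

variable {d : ℕ}

/-- Dilation by `ε` in the coordinates of `s` only. -/
def Ndil (ε : ℝ) (s : Finset (Fin d)) (D : Set (Fin d → ℝ)) : Set (Fin d → ℝ) :=
  {y | ∃ x ∈ D, (∀ i ∈ s, |y i - x i| < ε) ∧ ∀ i ∉ s, y i = x i}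

lemma Ndil_empty {D : Set (Fin d → ℝ)} : Ndil ε ∅ D = D := by
  ext y
  constructor
  · rintro ⟨x, hx, -, hns⟩
    have : y = x := funext fun i => hns i (Finset.notMem_empty i)
    rwa [this]
  · intro hy
    exact ⟨y, hy, fun i hi => absurd hi (Finset.notMem_empty i), fun i _ => rfl⟩

lemma measurableSet_Ndil (hε : 0 < ε) {s : Finset (Fin d)} {D : Set (Fin d → ℝ)}
    (hD : IsCompact D) : MeasurableSet (Ndil ε s D) := by
  classical
  set K : ℕ → Set (Fin d → ℝ) := fun n =>
    Set.pi univ (fun i => if i ∈ s then Icc (-(ε - ε/(n+1))) (ε - ε/(n+1)) else {0}) with hK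
  have hKcomp : ∀ n, IsCompact (K n) := by
    intro n
    apply isCompact_univ_pi
    intro i
    by_cases hi : i ∈ s
    · simp only [hK, hi, if_true]; exact isCompact_Icc
    · simp only [hK, hi, if_false]; exact isCompact_singleton
  have hrep : Ndil ε s D = ⋃ n : ℕ, D + K n := by
    ext y
    simp only [mem_iUnion, Set.mem_add]
    constructor
    · rintro ⟨x, hxD, hsmall, heq⟩
      -- find a uniform bound `m < ε`
      obtain ⟨m, hm0, hmε, hmb⟩ : ∃ m : ℝ, 0 ≤ m ∧ m < ε ∧ ∀ i ∈ s, |y i - x i| ≤ m := by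
        rcases Finset.eq_empty_or_nonempty s with rfl | hs
        · exact ⟨0, le_refl _, hε, fun i hi => absurd hi (Finset.notMem_empty i)⟩
        · refine ⟨s.sup' hs (fun i => |y i - x i|), ?_, ?_, ?_⟩
          · obtain ⟨i₀, hi₀⟩ := hs
            exact le_trans (abs_nonneg _) (Finset.le_sup' (fun i => |y i - x i|) hi₀)
          · exact (Finset.sup'_lt_iff hs).2 fun i hi => hsmall i hi
          · exact fun i hi => Finset.le_sup' (fun i => |y i - x i|) hi
      obtain ⟨n, hn⟩ : ∃ n : ℕ, ε / (n + 1) < ε - m := by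
        obtain ⟨n, hn⟩ := exists_nat_one_div_lt (div_pos (show (0:ℝ) < ε - m by linarith) hε)
        refine ⟨n, ?_⟩
        have h1 : ε / (n+1) = (1/(n+1)) * ε := by ring
        have h2 : ((ε - m)/ε) * ε = ε - m := by field_simp
        rw [h1, ← h2]
        exact mul_lt_mul_of_pos_right hn hε
      refine ⟨n, x, hxD, y - x, ?_, by simp⟩
      intro i _
      by_cases hi : i ∈ s
      · simp only [hK, hi, if_true, Pi.sub_apply, mem_Icc]
        have : |y i - x i| ≤ ε - ε/(n+1) := le_trans (hmb i hi) (by linarith)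
        rw [abs_le] at this
        exact this
      · simp only [hK, hi, if_false, Pi.sub_apply, mem_singleton_iff]
        rw [heq i hi]; ring
    · rintro ⟨n, x, hxD, w, hw, rfl⟩
      have hwc := fun i => hw i (mem_univ i)
      refine ⟨x, hxD, ?_, ?_⟩
      · intro i hi
        have := hwc i
        simp only [hK, hi, if_true, mem_Icc] at this
        have hd : ε / (n+1) > 0 := by positivity
        simp only [Pi.add_apply]
        rw [show x i + w i - x i = w i by ring, abs_lt]
        constructor <;> linarith [this.1, this.2]
      · intro i hi
        have := hwc i
        simp only [hK, hi, if_false, mem_singleton_iff] at this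
        simp only [Pi.add_apply, this, add_zero]
  rw [hrep]
  exact MeasurableSet.iUnion fun n =>
    ((hD.add (hKcomp n)).isClosed).measurableSet

lemma Ndil_window {s : Finset (Fin d)} {i : Fin d} (hi : i ∉ s) {t t' : ℝ}
    (h1 : t - ε < t') (h2 : t' < t + ε) {D : Set (Fin d → ℝ)} (z : Fin d → ℝ)
    (hz : update z i t' ∈ Ndil ε s D) : update z i t ∈ Ndil ε (insert i s) D := by
  classical
  obtain ⟨x, hxD, hs, hns⟩ := hz
  have hti : t' = x i := by
    have := hns i hi
    rwa [update_self] at this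
  refine ⟨x, hxD, ?_, ?_⟩
  · intro j hj
    rcases Finset.mem_insert.1 hj with rfl | hj'
    · rw [update_self, ← hti, abs_sub_lt_iff]
      constructor <;> linarith
    · have hji : j ≠ i := by rintro rfl; exact hi hj'
      have := hs j hj'
      rwa [update_of_ne hji] at this ⊢
  · intro j hj
    have hji : j ≠ i := fun hh => hj (hh ▸ Finset.mem_insert_self i s)
    have hjs : j ∉ s := fun hh => hj (Finset.mem_insert_of_mem hh)
    have := hns j hjs
    rwa [update_of_ne hji] at this ⊢

lemma phi_ae_Icc (hh : 0 < h) (hh2 : h ≤ 1/2) : ∀ᵐ t ∂(phi h), t ∈ Icc (0:ℝ) 1 := by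
  rw [ae_iff]
  have hs : {t : ℝ | ¬ t ∈ Icc (0:ℝ) 1} = (Icc (0:ℝ) 1)ᶜ := rfl
  rw [hs, phi_apply measurableSet_Icc.compl]
  have h1 : (Icc (0:ℝ) 1)ᶜ ∩ Ioo h (1-h) = ∅ := by
    ext x
    simp only [mem_inter_iff, mem_compl_iff, mem_Icc, mem_Ioo, mem_empty_iff_false, iff_false]
    rintro ⟨hx, h1, h2⟩
    exact hx ⟨by linarith, by linarith⟩
  have h2 : ((Icc (0:ℝ) 1)ᶜ).indicator (1 : ℝ → ℝ≥0∞) 0 = 0 := by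
    apply Set.indicator_of_notMem
    simp [mem_Icc]
  have h3 : ((Icc (0:ℝ) 1)ᶜ).indicator (1 : ℝ → ℝ≥0∞) 1 = 0 := by
    apply Set.indicator_of_notMem
    simp [mem_Icc]
  rw [h1, h2, h3, measure_empty]
  simp

lemma lmarg_le_one {s : Finset (Fin d)} {f : (Fin d → ℝ) → ℝ≥0∞} (hf : ∀ y, f y ≤ 1)
    (x : Fin d → ℝ) :
    (lmarginal (fun _ => volume.restrict (Icc (0:ℝ) 1)) s f) x ≤ 1 := by
  simp only [lmarginal]
  calc ∫⁻ y, f (updateFinset x s y) ∂(Measure.pi fun _ : s => volume.restrict (Icc (0:ℝ) 1))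
      ≤ ∫⁻ _, 1 ∂(Measure.pi fun _ : s => volume.restrict (Icc (0:ℝ) 1)) :=
        lintegral_mono fun y => hf _
    _ = 1 := by
        rw [lintegral_one, Measure.pi_univ]
        simp [Real.volume_Icc]

lemma exists_of_lmarg_ne_zero {s : Finset (Fin d)} {i : Fin d} (hi : i ∉ s)
    {D : Set (Fin d → ℝ)} (q : Fin d → ℝ) (t : ℝ)
    (hne : (lmarginal (fun _ => volume.restrict (Icc (0:ℝ) 1)) s ((Ndil ε s D).indicator 1))
        (update q i t) ≠ 0) :
    ∃ x ∈ D, x i = t := by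
  classical
  by_contra hcon
  push_neg at hcon
  apply hne
  simp only [lmarginal]
  have hzero : ∀ y : (j : s) → ℝ,
      ((Ndil ε s D).indicator (1 : (Fin d → ℝ) → ℝ≥0∞)) (updateFinset (update q i t) s y) = 0 := by
    intro y
    apply Set.indicator_of_notMem
    rintro ⟨x, hxD, -, hns⟩
    have hit : updateFinset (update q i t) s y i = x i := hns i hi
    have hval : updateFinset (update q i t) s y i = t := by
      simp [Function.updateFinset, hi]
    rw [hval] at hit
    exact hcon x hxD hit.symm
  calc ∫⁻ y, ((Ndil ε s D).indicator 1) (updateFinset (update q i t) s y)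
        ∂(Measure.pi fun _ : s => volume.restrict (Icc (0:ℝ) 1))
      = ∫⁻ _, 0 ∂(Measure.pi fun _ : s => volume.restrict (Icc (0:ℝ) 1)) :=
        lintegral_congr fun y => hzero y
    _ = 0 := lintegral_zero

/-- Main induction over coordinates. -/
lemma main_ind (hε : 0 < ε) (hh : 0 < h) (hhε : 2*h ≤ ε) (hh2 : h ≤ 1/2)
    {D : Set (Fin d → ℝ)} (hD : IsCompact D) (hD01 : D ⊆ Icc (0 : Fin d → ℝ) 1)
    (hDpair : ∀ i : Fin d, ¬((∃ x ∈ D, x i = 0) ∧ (∃ x ∈ D, x i = 1)))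
    (s : Finset (Fin d)) :
    ∀ q : Fin d → ℝ, q ∈ Icc (0 : Fin d → ℝ) 1 →
      (lmarginal (fun _ => phi h) s (D.indicator 1)) q
        ≤ (lmarginal (fun _ => volume.restrict (Icc (0:ℝ) 1)) s
            ((Ndil ε s D).indicator 1)) q := by
  classical
  have hDm : MeasurableSet D := hD.isClosed.measurableSet
  have hfD : Measurable (D.indicator (1 : (Fin d → ℝ) → ℝ≥0∞)) :=
    measurable_one.indicator hDm
  induction s using Finset.induction with
  | empty =>
      intro q hq
      simp only [lmarginal_empty, Ndil_empty]
      exact le_rfl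
  | @insert i s hi ih =>
      intro q hq
      have hfN : Measurable ((Ndil ε s D).indicator (1 : (Fin d → ℝ) → ℝ≥0∞)) :=
        measurable_one.indicator (measurableSet_Ndil hε hD)
      have hfNi : Measurable ((Ndil ε (insert i s) D).indicator (1 : (Fin d → ℝ) → ℝ≥0∞)) :=
        measurable_one.indicator (measurableSet_Ndil hε hD)
      rw [lmarginal_insert _ hfD hi q, lmarginal_insert _ hfNi hi q]
      set g : ℝ → ℝ≥0∞ := fun t =>
        (lmarginal (fun _ => volume.restrict (Icc (0:ℝ) 1)) s
          ((Ndil ε s D).indicator 1)) (update q i t) with hgdef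
      have hgmeas : Measurable g :=
        (Measurable.lmarginal _ hfN).comp (measurable_update q)
      have hind1 : ∀ y : Fin d → ℝ, ((Ndil ε s D).indicator (1 : (Fin d → ℝ) → ℝ≥0∞)) y ≤ 1 := by
        intro y
        classical
        rw [Set.indicator_apply]
        split_ifs
        · exact le_rfl
        · exact zero_le
      have hg1 : ∀ t, g t ≤ 1 := fun t => lmarg_le_one hind1 _
      have hgsupp : ∀ t, g t ≠ 0 → t ∈ Icc (0:ℝ) 1 := by
        intro t hne
        obtain ⟨x, hxD, hxi⟩ := exists_of_lmarg_ne_zero hi q t hne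
        have := hD01 hxD
        rw [Set.mem_Icc] at this
        exact ⟨by rw [← hxi]; exact this.1 i, by rw [← hxi]; exact this.2 i⟩
      have hgend : g 0 = 0 ∨ g 1 = 0 := by
        by_contra hcon
        push_neg at hcon
        obtain ⟨x0, hx0, hx0i⟩ := exists_of_lmarg_ne_zero hi q 0 hcon.1
        obtain ⟨x1, hx1, hx1i⟩ := exists_of_lmarg_ne_zero hi q 1 hcon.2
        exact hDpair i ⟨⟨x0, hx0, hx0i⟩, ⟨x1, hx1, hx1i⟩⟩
      calc ∫⁻ t, (lmarginal (fun _ => phi h) s (D.indicator 1)) (update q i t) ∂(phi h)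
          ≤ ∫⁻ t, g t ∂(phi h) := by
            refine lintegral_mono_ae ?_
            filter_upwards [phi_ae_Icc hh hh2] with t ht
            refine ih (update q i t) ?_
            rw [Set.mem_Icc] at hq ⊢
            constructor
            · intro j
              by_cases hj : j = i
              · subst hj; rw [update_self]; exact ht.1
              · rw [update_of_ne hj]; exact hq.1 j
            · intro j
              by_cases hj : j = i
              · subst hj; rw [update_self]; exact ht.2
              · rw [update_of_ne hj]; exact hq.2 j
        _ ≤ ∫⁻ t, (⨆ t' ∈ Ioo (t-ε) (t+ε), g t') ∂(volume.restrict (Icc (0:ℝ) 1)) :=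
            layer1d hε hh hhε hh2 hgmeas hg1 hgsupp hgend
        _ ≤ ∫⁻ t, (lmarginal (fun _ => volume.restrict (Icc (0:ℝ) 1)) s
              ((Ndil ε (insert i s) D).indicator 1)) (update q i t)
            ∂(volume.restrict (Icc (0:ℝ) 1)) := by
            refine lintegral_mono fun t => ?_
            refine iSup₂_le fun t' ht' => ?_
            show (lmarginal (fun _ => volume.restrict (Icc (0:ℝ) 1)) s
              ((Ndil ε s D).indicator 1)) (update q i t') ≤ _
            rw [lmarginal_update_of_notMem hfN hi,
              lmarginal_update_of_notMem hfNi hi]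
            refine lmarginal_mono (fun z => ?_) q
            simp only [comp_apply]
            by_cases hz : update z i t' ∈ Ndil ε s D
            · rw [Set.indicator_of_mem hz,
                Set.indicator_of_mem (Ndil_window hi ht'.1 ht'.2 z hz)]
              simp
            · rw [Set.indicator_of_notMem hz]
              exact zero_le
  
lemma phi_Icc (hh : 0 < h) (hh2 : h ≤ 1/2) :
    phi h (Icc (0:ℝ) 1) = ENNReal.ofReal (1 + 2*h) := by
  rw [phi_apply measurableSet_Icc]
  have h1 : Icc (0:ℝ) 1 ∩ Ioo h (1-h) = Ioo h (1-h) := by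
    apply inter_eq_self_of_subset_right
    intro x hx
    exact ⟨by linarith [hx.1], by linarith [hx.2]⟩
  have h2 : (Icc (0:ℝ) 1).indicator (1 : ℝ → ℝ≥0∞) 0 = 1 :=
    Set.indicator_of_mem (by simp) _
  have h3 : (Icc (0:ℝ) 1).indicator (1 : ℝ → ℝ≥0∞) 1 = 1 :=
    Set.indicator_of_mem (by simp) _
  rw [h1, h2, h3, Real.volume_Ioo]
  rw [show (1:ℝ≥0∞) + 1 = ((2:ℕ) : ℝ≥0∞) by norm_num]
  rw [show ((2:ℕ) : ℝ≥0∞) = ENNReal.ofReal ((2:ℕ):ℝ) by rw [ENNReal.ofReal_natCast]]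
  rw [← ENNReal.ofReal_mul (by linarith)]
  rw [← ENNReal.ofReal_add (by linarith) (by positivity)]
  congr 1
  push_cast
  ring


end NbhdLeb

open NbhdLeb in
/-- **Neighborhood Lebesgue Theorem.** Given a Lebesgue cover of `[0,1]^d` (a finite family
of closed sets covering the cube, none containing two points of the cube at `ℓ∞` distance `1`),
for any `ε > 0` there is a point `p` of the cube whose open `ℓ∞` `ε`-ball intersects at least
`⌈(1 + ε/(1+ε))^d⌉` sets of the cover. -/
theorem neighborhood_lebesgue
    (d N : ℕ) (hd : 1 ≤ d) (C : Fin N → Set (Fin d → ℝ))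
    (hclosed : ∀ n, IsClosed (C n))
    (hcover : Set.Icc (0 : Fin d → ℝ) 1 ⊆ ⋃ n, C n)
    (hopp : ∀ n, ∀ x ∈ Set.Icc (0 : Fin d → ℝ) 1, ∀ y ∈ Set.Icc (0 : Fin d → ℝ) 1,
      x ∈ C n → y ∈ C n → dist x y ≠ 1)
    (ε : ℝ) (hε : 0 < ε) :
    ∃ p ∈ Set.Icc (0 : Fin d → ℝ) 1,
      (⌈(1 + ε / (1 + ε)) ^ d⌉₊ : ℕ∞) ≤
        {n : Fin N | (Metric.ball p ε ∩ C n).Nonempty}.encard := by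
  classical
  by_contra hcon
  push_neg at hcon
  -- parameters
  set h : ℝ := ε / (2*(1+ε)) with hdefh
  have hh : 0 < h := by positivity
  have h2h : 2*h = ε/(1+ε) := by rw [hdefh]; field_simp
  have hhε : 2*h ≤ ε := by
    rw [h2h]
    rw [div_le_iff₀ (by linarith)]
    nlinarith
  have hh2 : h ≤ 1/2 := by
    rw [hdefh, div_le_div_iff₀ (by linarith) (by norm_num)]
    linarith
  set x : ℝ := (1 + 2*h)^d with hxdef
  have hx1 : (1:ℝ) < 1 + 2*h := by linarith
  have hxpos : (0:ℝ) < x := by positivity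
  set K : ℕ := ⌈x⌉₊ with hKdef
  have hKx : K = ⌈(1 + ε / (1 + ε)) ^ d⌉₊ := by rw [hKdef, hxdef, h2h]
  -- the pieces of the cover
  set D : Fin N → Set (Fin d → ℝ) := fun n => C n ∩ Icc 0 1 with hDdef
  have hDcomp : ∀ n, IsCompact (D n) := fun n =>
    (isCompact_Icc).inter_left (hclosed n)
  have hDmeas : ∀ n, MeasurableSet (D n) := fun n => (hDcomp n).isClosed.measurableSet
  have hD01 : ∀ n, D n ⊆ Icc 0 1 := fun n => inter_subset_right
  have hDpair : ∀ n, ∀ i : Fin d, ¬((∃ x ∈ D n, x i = 0) ∧ (∃ x ∈ D n, x i = 1)) := by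
    rintro n i ⟨⟨u, hu, hui⟩, ⟨v, hv, hvi⟩⟩
    refine hopp n u hu.2 v hv.2 hu.1 hv.1 ?_
    apply le_antisymm
    · rw [dist_pi_le_iff (by norm_num)]
      intro j
      rw [Real.dist_eq, abs_le]
      have h1 := (hu.2).1 j; have h2 := (hu.2).2 j
      have h3 := (hv.2).1 j; have h4 := (hv.2).2 j
      simp only [Pi.zero_apply, Pi.one_apply] at h1 h2 h3 h4
      constructor <;> linarith
    · calc (1:ℝ) = dist (u i) (v i) := by rw [hui, hvi, Real.dist_eq]; norm_num
        _ ≤ dist u v := dist_le_pi_dist u v i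
  -- apply the main inequality at q = 0
  have h0mem : (0 : Fin d → ℝ) ∈ Icc (0 : Fin d → ℝ) 1 := ⟨le_rfl, zero_le_one⟩
  have hmain : ∀ n, (Measure.pi fun _ : Fin d => phi h) (D n)
      ≤ (Measure.pi fun _ : Fin d => volume.restrict (Icc (0:ℝ) 1)) (Ndil ε Finset.univ (D n)) := by
    intro n
    have := main_ind hε hh hhε hh2 (hDcomp n) (hD01 n) (hDpair n) Finset.univ 0 h0mem
    rw [lmarginal_univ, lmarginal_univ] at this
    rwa [lintegral_indicator_one (hDmeas n),
      lintegral_indicator_one (measurableSet_Ndil hε (hDcomp n))] at this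
  -- lower bound for the sum
  have hpiIcc : (Measure.pi fun _ : Fin d => phi h) (Icc (0 : Fin d → ℝ) 1)
      = ENNReal.ofReal x := by
    rw [← Set.pi_univ_Icc, Measure.pi_pi]
    have : ∀ i : Fin d, phi h (Icc ((0:Fin d → ℝ) i) ((1:Fin d → ℝ) i))
        = ENNReal.ofReal (1 + 2*h) := fun i => phi_Icc hh hh2
    rw [Finset.prod_congr rfl (fun i _ => this i), Finset.prod_const, Finset.card_univ,
      Fintype.card_fin, hxdef, ENNReal.ofReal_pow (by linarith)]
  have hcoverD : Icc (0 : Fin d → ℝ) 1 ⊆ ⋃ n, D n := by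
    intro q hq
    obtain ⟨n, hn⟩ := mem_iUnion.1 (hcover hq)
    exact mem_iUnion.2 ⟨n, hn, hq⟩
  have hsum : ENNReal.ofReal x ≤
      ∑ n : Fin N, (Measure.pi fun _ : Fin d => volume.restrict (Icc (0:ℝ) 1))
        (Ndil ε Finset.univ (D n)) := by
    calc ENNReal.ofReal x = (Measure.pi fun _ : Fin d => phi h) (Icc (0 : Fin d → ℝ) 1) :=
          hpiIcc.symm
      _ ≤ (Measure.pi fun _ : Fin d => phi h) (⋃ n, D n) := measure_mono hcoverD
      _ ≤ ∑ n : Fin N, (Measure.pi fun _ : Fin d => phi h) (D n) := measure_iUnion_fintype_le _ _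
      _ ≤ _ := Finset.sum_le_sum fun n _ => hmain n
  -- the counting function
  set piV : Measure (Fin d → ℝ) := Measure.pi fun _ : Fin d => volume.restrict (Icc (0:ℝ) 1)
    with hpiV
  set f : (Fin d → ℝ) → ℝ≥0∞ := fun q => ∑ n : Fin N, (Ndil ε Finset.univ (D n)).indicator 1 q
    with hfdef
  have hfsum : ∫⁻ q, f q ∂piV = ∑ n : Fin N, piV (Ndil ε Finset.univ (D n)) := by
    rw [hfdef]
    rw [lintegral_finset_sum _ fun n _ => measurable_one.indicator
      (measurableSet_Ndil hε (hDcomp n))]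
    exact Finset.sum_congr rfl fun n _ =>
      lintegral_indicator_one (measurableSet_Ndil hε (hDcomp n))
  -- pointwise bound on the cube
  have hptwise : ∀ q ∈ Icc (0 : Fin d → ℝ) 1, f q ≤ (K - 1 : ℕ) := by
    intro q hq
    set Fq : Finset (Fin N) := Finset.univ.filter (fun n => q ∈ Ndil ε Finset.univ (D n))
      with hFq
    have hfq : f q = (Fq.card : ℝ≥0∞) := by
      rw [hfdef, hFq, ← Finset.sum_boole]
      exact Finset.sum_congr rfl fun n _ => Set.indicator_apply _ _ _
    have hsub : (↑Fq : Set (Fin N)) ⊆ {n : Fin N | (Metric.ball q ε ∩ C n).Nonempty} := by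
      intro n hn
      rw [Finset.mem_coe, hFq, Finset.mem_filter] at hn
      obtain ⟨z, hzD, hzs, -⟩ := hn.2
      refine ⟨z, ?_, hzD.1⟩
      rw [Metric.mem_ball, dist_pi_lt_iff hε]
      intro i
      rw [Real.dist_eq, abs_sub_comm]
      exact hzs i (Finset.mem_univ i)
    have hcard : Fq.card ≤ K - 1 := by
      by_contra hc
      push_neg at hc
      have hK1 : 1 ≤ K := Nat.one_le_ceil_iff.2 hxpos
      have hKcard : K ≤ Fq.card := by omega
      have hbig : (K : ℕ∞) ≤ {n : Fin N | (Metric.ball q ε ∩ C n).Nonempty}.encard := by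
        calc (K : ℕ∞) ≤ (Fq.card : ℕ∞) := by exact_mod_cast hKcard
          _ = (↑Fq : Set (Fin N)).encard := (Set.encard_coe_eq_coe_finsetCard Fq).symm
          _ ≤ _ := Set.encard_mono hsub
      have hlt := hcon q hq
      rw [← hKx] at hlt
      exact absurd hbig (not_le.2 hlt)
    rw [hfq]
    exact_mod_cast Nat.cast_le.2 hcard
  -- the product measure is a probability measure concentrated on the cube
  have hIcc1 : piV (Icc (0 : Fin d → ℝ) 1) = 1 := by
    rw [hpiV, ← Set.pi_univ_Icc, Measure.pi_pi]
    have : ∀ i : Fin d, (volume.restrict (Icc (0:ℝ) 1))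
        (Icc ((0:Fin d → ℝ) i) ((1:Fin d → ℝ) i)) = 1 := by
      intro i
      rw [Measure.restrict_apply measurableSet_Icc]
      simp [Real.volume_Icc]
    rw [Finset.prod_congr rfl (fun i _ => this i), Finset.prod_const_one]
  have huniv : piV Set.univ = 1 := by
    rw [hpiV, Measure.pi_univ]
    have : ∀ i : Fin d, (volume.restrict (Icc (0:ℝ) 1)) Set.univ = 1 := by
      intro i
      rw [Measure.restrict_apply_univ]
      simp [Real.volume_Icc]
    rw [Finset.prod_congr rfl (fun i _ => this i), Finset.prod_const_one]
  have haeIcc : ∀ᵐ q ∂piV, q ∈ Icc (0 : Fin d → ℝ) 1 := by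
    rw [ae_iff]
    have hset : {q : Fin d → ℝ | ¬ q ∈ Icc (0 : Fin d → ℝ) 1} = (Icc (0 : Fin d → ℝ) 1)ᶜ := rfl
    rw [hset, measure_compl measurableSet_Icc (by rw [hIcc1]; exact ENNReal.one_ne_top), hIcc1, huniv]
    simp
  have hbound : ∫⁻ q, f q ∂piV ≤ ((K - 1 : ℕ) : ℝ≥0∞) := by
    calc ∫⁻ q, f q ∂piV ≤ ∫⁻ _, ((K - 1 : ℕ) : ℝ≥0∞) ∂piV := by
          refine lintegral_mono_ae ?_
          filter_upwards [haeIcc] with q hq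
          exact hptwise q hq
      _ = ((K - 1 : ℕ) : ℝ≥0∞) * piV Set.univ := lintegral_const _
      _ = ((K - 1 : ℕ) : ℝ≥0∞) := by rw [huniv, mul_one]
  have hlow : ENNReal.ofReal x ≤ ∫⁻ q, f q ∂piV := by
    rw [hfsum]; exact hsum
  have hK1x : ((K - 1 : ℕ) : ℝ≥0∞) < ENNReal.ofReal x := by
    have h1 : ((K - 1 : ℕ) : ℝ) < x := by
      rw [← Nat.lt_ceil]
      have hK1 : 1 ≤ K := Nat.one_le_ceil_iff.2 hxpos
      omega
    calc ((K - 1 : ℕ) : ℝ≥0∞) = ENNReal.ofReal ((K - 1 : ℕ) : ℝ) := by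
          rw [ENNReal.ofReal_natCast]
      _ < ENNReal.ofReal x := (ENNReal.ofReal_lt_ofReal_iff hxpos).2 h1
  exact absurd (le_trans hlow hbound) (not_le.2 hK1x)
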